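/- arXiv:2311.04070 — 2 statements merged into one kernel-verified Lean document; each statement's English description precedes it below -/
import Mathlib

section
/- The mixed composition product distributes over the shuffle product in its left argument: for all noncommutative formal power series c, d over the alphabet X = {x0, x1} and every pair z = (z1, z2) of formal power series, (c ⧢ d) ∘̃ z = (c ∘̃ z) ⧢ (d ∘̃ z), where ⧢ is the shuffle product and ∘̃ is the mixed composition product. -/
/-- Words over the alphabet X = {x₀, x₁}, encoded as lists of booleans
(`false` ↔ x₀, `true` ↔ x₁). -/
abbrev Word : Type := List Bool

/-- Noncommutative formal power series over X with real coefficients. -/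
abbrev Series : Type := Word → ℝ

/-- Auxiliary recursion computing the coefficient of the shuffle product. -/
def sh : Word → Series → Series → ℝ
  | [], c, d => c [] * d []
  | a :: w, c, d => sh w (fun u => c (a :: u)) d + sh w c (fun u => d (a :: u))

/-- The shuffle product of two series. -/
def shuffle (c d : Series) : Series := fun w => sh w c d

/-- Left concatenation by the letter x₀. -/
def X0f (c : Series) : Series := fun w =>
  match w with
  | false :: w' => c w'
  | _ => 0

/-- Left concatenation by the letter x₁. -/
def X1f (c : Series) : Series := fun w =>
  match w with
  | true :: w' => c w'
  | _ => 0

/-- The indicator series of a word. -/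
def deltaW (η : Word) : Series := fun w => if w = η then 1 else 0

/-- The shuffle unit 1∅. -/
def oneS : Series := deltaW []

/-- Mixed composition product of a word with a pair of series:
∅ ∘̃ z = ∅, (x₀η) ∘̃ z = x₀(η ∘̃ z),
(x₁η) ∘̃ z = x₁(z₁ ⧢ (η ∘̃ z)) + x₀(z₂ ⧢ (η ∘̃ z)). -/
def wmix : Word → Series × Series → Series
  | [], _ => oneS
  | false :: η, z => X0f (wmix η z)
  | true :: η, z => X1f (shuffle z.1 (wmix η z)) + X0f (shuffle z.2 (wmix η z))

/-- Mixed composition product `c ∘̃ z`, extended linearly in the left argument.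
(Since `wmix η z` vanishes on words shorter than `η`, the sum may be truncated.) -/
def mixcomp (c : Series) (z : Series × Series) : Series := fun w =>
  ∑ n ∈ Finset.range (w.length + 1), ∑ f : Fin n → Bool,
    c (List.ofFn f) * wmix (List.ofFn f) z w

/-- Composition product of a word with a series:
∅ ∘ d = ∅, (x₀η) ∘ d = x₀(η ∘ d), (x₁η) ∘ d = x₀(d ⧢ (η ∘ d)). -/
def wcomp : Word → Series → Series
  | [], _ => oneS
  | false :: η, d => X0f (wcomp η d)
  | true :: η, d => X0f (shuffle d (wcomp η d))

/-- Composition product `c ∘ d`, extended linearly in the left argument. -/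
def compP (c d : Series) : Series := fun w =>
  ∑ n ∈ Finset.range (w.length + 1), ∑ f : Fin n → Bool,
    c (List.ofFn f) * wcomp (List.ofFn f) d w

/-- The group product on G: (c₁,c₂)·(d₁,d₂) = (c₁ ⧢ d₁, c₂ + c₁ ⧢ d₂). -/
def gmul (c d : Series × Series) : Series × Series :=
  (shuffle c.1 d.1, c.2 + shuffle c.1 d.2)

/-- The identity element e = (1∅, 0) of G. -/
def geId : Series × Series := (oneS, 0)

/-- Shuffle powers. -/
def shPow (c : Series) : ℕ → Series
  | 0 => oneS
  | n + 1 => shuffle c (shPow c n)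

/-- Shuffle inverse of a series with constant coefficient 1, via the
geometric series c^{⧢ -1} = Σ_k (1∅ - c)^{⧢ k} (truncated by word length,
which is exact since 1∅ - c is proper). -/
def shInv (c : Series) : Series := fun w =>
  ∑ k ∈ Finset.range (w.length + 1), shPow (oneS - c) k w

/-- The group inverse in (G,·). -/
def ginv (c : Series × Series) : Series × Series :=
  (shInv c.1, -(shuffle (shInv c.1) c.2))

/-- The product ◁ on G, componentwise mixed composition. -/
def triOp (c d : Series × Series) : Series × Series :=
  (mixcomp c.1 d, mixcomp c.2 d)

/-- The Grossman–Larson product c ⋆ d = (c ◁ d) · d. -/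
def starOp (c d : Series × Series) : Series × Series := gmul (triOp c d) d

-- ## auxiliary lemmas

lemma sh_congr {w : Word} {c c' d d' : Series}
    (hc : ∀ u : Word, u.length ≤ w.length → c u = c' u)
    (hd : ∀ u : Word, u.length ≤ w.length → d u = d' u) :
    sh w c d = sh w c' d' := by
  induction w generalizing c c' d d' with
  | nil => simp [sh, hc [] (by simp), hd [] (by simp)]
  | cons a w ih =>
    simp only [sh]
    rw [ih (fun u hu => hc (a :: u) (by simpa using Nat.succ_le_succ hu))
        (fun u hu => hd u (le_trans hu (Nat.le_succ _))),
      ih (fun u hu => hc u (le_trans hu (Nat.le_succ _)))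
        (fun u hu => hd (a :: u) (by simpa using Nat.succ_le_succ hu))]

lemma sh_zero_right {w : Word} {c d : Series}
    (hd : ∀ u : Word, u.length ≤ w.length → d u = 0) : sh w c d = 0 := by
  induction w generalizing c d with
  | nil => simp [sh, hd [] (by simp)]
  | cons a w ih =>
    simp only [sh]
    rw [ih (fun u hu => hd u (le_trans hu (Nat.le_succ _))),
      ih (fun u hu => hd (a :: u) (by simpa using Nat.succ_le_succ hu))]
    ring

lemma sh_add_right (w : Word) (c d e : Series) :
    sh w c (fun u => d u + e u) = sh w c d + sh w c e := by
  induction w generalizing c d e with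
  | nil => simp [sh]; ring
  | cons a w ih => simp only [sh, ih]; ring

lemma sh_add_left (w : Word) (c d e : Series) :
    sh w (fun u => c u + d u) e = sh w c e + sh w d e := by
  induction w generalizing c d e with
  | nil => simp [sh]; ring
  | cons a w ih => simp only [sh, ih]; ring

lemma sh_smul_right (w : Word) (r : ℝ) (c d : Series) :
    sh w c (fun u => r * d u) = r * sh w c d := by
  induction w generalizing c d with
  | nil => simp [sh]; ring
  | cons a w ih => simp only [sh, ih]; ring

lemma sh_comm (w : Word) (c d : Series) : sh w c d = sh w d c := by
  induction w generalizing c d with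
  | nil => simp [sh]; ring
  | cons a w ih => simp only [sh, ih]; ring

lemma sh_sum_right {ι : Type*} (s : Finset ι) (w : Word) (c : Series) (d : ι → Series) :
    sh w c (fun u => ∑ i ∈ s, d i u) = ∑ i ∈ s, sh w c (d i) := by
  classical
  induction s using Finset.induction_on with
  | empty => simp; exact sh_zero_right (fun u _ => rfl)
  | insert _ _ h ih =>
    rw [Finset.sum_insert h]
    rw [show (fun u => ∑ i ∈ insert _ _, d i u) = fun u => d _ u + ∑ i ∈ _, d i u from
      funext fun u => Finset.sum_insert h]
    rw [sh_add_right, ih]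

lemma sh_assoc (w : Word) (a b c : Series) :
    sh w (shuffle a b) c = sh w a (shuffle b c) := by
  induction w generalizing a b c with
  | nil => simp [sh, shuffle]; ring
  | cons e w ih =>
    have h1 : (fun u => shuffle a b (e :: u)) =
        fun u => shuffle (fun v => a (e :: v)) b u + shuffle a (fun v => b (e :: v)) u := by
      funext u; simp [shuffle, sh]
    have h2 : (fun u => shuffle b c (e :: u)) =
        fun u => shuffle (fun v => b (e :: v)) c u + shuffle b (fun v => c (e :: v)) u := by
      funext u; simp [shuffle, sh]
    simp only [sh, h1, h2, sh_add_left, sh_add_right, ih]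
    ring

lemma wmix_vanish (z : Series × Series) : ∀ (η u : Word), u.length < η.length → wmix η z u = 0 := by
  intro η
  induction η with
  | nil => intro u h; simp at h
  | cons b η ih =>
    intro u h
    cases b with
    | false =>
      match u with
      | [] => rfl
      | false :: u' => exact ih u' (by simpa using h)
      | true :: u' => rfl
    | true =>
      match u with
      | [] => simp [wmix, X0f, X1f]
      | false :: u' =>
        simp only [wmix, Pi.add_apply, X0f, X1f, shuffle]
        rw [sh_zero_right (fun v hv => ih v (lt_of_le_of_lt hv (by simpa using h)))]
        simp
      | true :: u' =>
        simp only [wmix, Pi.add_apply, X0f, X1f, shuffle]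
        rw [sh_zero_right (fun v hv => ih v (lt_of_le_of_lt hv (by simpa using h)))]
        simp

lemma mixcomp_nil (c : Series) (z : Series × Series) : mixcomp c z [] = c [] := by
  simp [mixcomp, wmix, oneS, deltaW, List.ofFn_zero]
lemma ofFn_cons {n : ℕ} (b : Bool) (g : Fin n → Bool) :
    List.ofFn (Fin.cons b g) = b :: List.ofFn g := by
  rw [List.ofFn_succ]; simp

lemma mixcomp_reshape (c : Series) (z : Series × Series) (a : Bool) (w : Word) :
    mixcomp c z (a :: w) = ∑ n ∈ Finset.range (w.length + 1), ∑ b : Bool,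
      ∑ g : Fin n → Bool, c (b :: List.ofFn g) * wmix (b :: List.ofFn g) z (a :: w) := by
  show (∑ n ∈ Finset.range ((a :: w).length + 1), ∑ f : Fin n → Bool,
      c (List.ofFn f) * wmix (List.ofFn f) z (a :: w)) = _
  rw [List.length_cons, Finset.sum_range_succ']
  have h0 : (∑ f : Fin 0 → Bool, c (List.ofFn f) * wmix (List.ofFn f) z (a :: w)) = 0 := by
    simp [wmix, oneS, deltaW]
  rw [h0, add_zero]
  refine Finset.sum_congr rfl fun n _ => ?_
  rw [← Equiv.sum_comp (Fin.consEquiv fun _ => Bool)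
      (fun f => c (List.ofFn f) * wmix (List.ofFn f) z (a :: w)), Fintype.sum_prod_type]
  refine Finset.sum_congr rfl fun b _ => Finset.sum_congr rfl fun g _ => ?_
  simp [Fin.consEquiv, ofFn_cons]

lemma shuffle_mixcomp_aux (c : Series) (z : Series × Series) (w : Word) (y : Series) :
    (∑ n ∈ Finset.range (w.length + 1), ∑ g : Fin n → Bool,
      c (List.ofFn g) * sh w y (wmix (List.ofFn g) z)) = sh w y (mixcomp c z) := by
  have : ∀ n ∈ Finset.range (w.length + 1), ∀ g : Fin n → Bool,
      c (List.ofFn g) * sh w y (wmix (List.ofFn g) z)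
        = sh w y (fun u => c (List.ofFn g) * wmix (List.ofFn g) z u) := by
    intro n _ g; rw [sh_smul_right]
  rw [Finset.sum_congr rfl fun n hn => Finset.sum_congr rfl fun g _ => this n hn g]
  rw [Finset.sum_congr rfl fun n _ => (sh_sum_right Finset.univ w y _).symm,
    ← sh_sum_right]
  refine sh_congr (fun u _ => rfl) (fun u hu => ?_)
  show _ = ∑ n ∈ Finset.range (u.length + 1), ∑ f : Fin n → Bool,
      c (List.ofFn f) * wmix (List.ofFn f) z u
  refine (Finset.sum_subset (Finset.range_subset_range.mpr (by omega)) ?_).symm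
  intro n _ hn
  have hlt : u.length < n := by simp at hn; omega
  refine Finset.sum_eq_zero fun g _ => ?_
  rw [wmix_vanish z _ u (by simpa using hlt), mul_zero]

lemma mixcomp_cons_false (c : Series) (z : Series × Series) (w : Word) :
    mixcomp c z (false :: w) = mixcomp (fun u => c (false :: u)) z w
      + sh w z.2 (mixcomp (fun u => c (true :: u)) z) := by
  rw [mixcomp_reshape]
  have : ∀ n ∈ Finset.range (w.length + 1),
      (∑ b : Bool, ∑ g : Fin n → Bool, c (b :: List.ofFn g) * wmix (b :: List.ofFn g) z (false :: w))
      = (∑ g : Fin n → Bool, c (true :: List.ofFn g) * sh w z.2 (wmix (List.ofFn g) z))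
        + ∑ g : Fin n → Bool, c (false :: List.ofFn g) * wmix (List.ofFn g) z w := by
    intro n _
    rw [Fintype.sum_bool]
    congr 1
    · refine Finset.sum_congr rfl fun g _ => ?_
      congr 1
      show (X1f (shuffle z.1 (wmix (List.ofFn g) z))
          + X0f (shuffle z.2 (wmix (List.ofFn g) z))) (false :: w) = _
      simp [X0f, X1f, shuffle]
  rw [Finset.sum_congr rfl this, Finset.sum_add_distrib, add_comm]
  congr 1
  exact shuffle_mixcomp_aux (fun u => c (true :: u)) z w z.2

lemma mixcomp_cons_true (c : Series) (z : Series × Series) (w : Word) :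
    mixcomp c z (true :: w) = sh w z.1 (mixcomp (fun u => c (true :: u)) z) := by
  rw [mixcomp_reshape]
  have : ∀ n ∈ Finset.range (w.length + 1),
      (∑ b : Bool, ∑ g : Fin n → Bool, c (b :: List.ofFn g) * wmix (b :: List.ofFn g) z (true :: w))
      = ∑ g : Fin n → Bool, c (true :: List.ofFn g) * sh w z.1 (wmix (List.ofFn g) z) := by
    intro n _
    rw [Fintype.sum_bool]
    have h2 : (∑ g : Fin n → Bool,
        c (false :: List.ofFn g) * wmix (false :: List.ofFn g) z (true :: w)) = 0 := by
      refine Finset.sum_eq_zero fun g _ => ?_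
      show c _ * X0f (wmix (List.ofFn g) z) (true :: w) = 0
      simp [X0f]
    rw [h2, add_zero]
    refine Finset.sum_congr rfl fun g _ => ?_
    congr 1
    show (X1f (shuffle z.1 (wmix (List.ofFn g) z))
        + X0f (shuffle z.2 (wmix (List.ofFn g) z))) (true :: w) = _
    simp [X0f, X1f, shuffle]
  rw [Finset.sum_congr rfl this]
  exact shuffle_mixcomp_aux (fun u => c (true :: u)) z w z.1
lemma mixcomp_add (p q : Series) (z : Series × Series) (w : Word) :
    mixcomp (fun u => p u + q u) z w = mixcomp p z w + mixcomp q z w := by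
  simp only [mixcomp, add_mul, Finset.sum_add_distrib]

lemma shuffle_comm (a b : Series) : shuffle a b = shuffle b a :=
  funext fun w => sh_comm w a b

lemma key (z : Series × Series) : ∀ (n : ℕ) (w : Word), w.length ≤ n → ∀ c d : Series,
    mixcomp (shuffle c d) z w = shuffle (mixcomp c z) (mixcomp d z) w := by
  intro n
  induction n with
  | zero =>
    intro w hw c d
    have : w = [] := List.length_eq_zero_iff.mp (Nat.le_zero.mp hw)
    subst this
    show mixcomp (shuffle c d) z [] = sh [] (mixcomp c z) (mixcomp d z)
    rw [mixcomp_nil]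
    show shuffle c d [] = mixcomp c z [] * mixcomp d z []
    rw [mixcomp_nil, mixcomp_nil]; rfl
  | succ n ih =>
    intro w hw c d
    match w with
    | [] =>
      show mixcomp (shuffle c d) z [] = sh [] (mixcomp c z) (mixcomp d z)
      rw [mixcomp_nil]
      show shuffle c d [] = mixcomp c z [] * mixcomp d z []
      rw [mixcomp_nil, mixcomp_nil]; rfl
    | a :: w' =>
      have hw' : w'.length ≤ n := by
        simpa using Nat.le_of_succ_le_succ (by simpa using hw)
      have hsplit : ∀ (b : Bool) (c d : Series), (fun u : Word => shuffle c d (b :: u))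
          = fun u => shuffle (fun v => c (b :: v)) d u + shuffle c (fun v => d (b :: v)) u :=
        fun b c d => funext fun u => rfl
      have hD1 : ∀ u : Word, u.length ≤ w'.length →
          mixcomp (fun u' => shuffle c d (true :: u')) z u
            = (fun v => shuffle (mixcomp (fun v => c (true :: v)) z) (mixcomp d z) v
              + shuffle (mixcomp c z) (mixcomp (fun v => d (true :: v)) z) v) u := by
        intro u hu
        rw [hsplit true c d, mixcomp_add,
          ih u (le_trans hu hw') (fun v => c (true :: v)) d,
          ih u (le_trans hu hw') c (fun v => d (true :: v))]
      cases a with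
      | false =>
        rw [mixcomp_cons_false, hsplit false c d, mixcomp_add,
          ih w' hw' (fun v => c (false :: v)) d,
          ih w' hw' c (fun v => d (false :: v))]
        rw [sh_congr (fun u _ => rfl) hD1, sh_add_right]
        show _ = sh (false :: w') (mixcomp c z) (mixcomp d z)
        simp only [sh]
        have e_c : (fun u : Word => mixcomp c z (false :: u))
            = fun u => mixcomp (fun v => c (false :: v)) z u
              + shuffle z.2 (mixcomp (fun v => c (true :: v)) z) u :=
          funext fun u => mixcomp_cons_false c z u
        have e_d : (fun u : Word => mixcomp d z (false :: u))
            = fun u => mixcomp (fun v => d (false :: v)) z u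
              + shuffle z.2 (mixcomp (fun v => d (true :: v)) z) u :=
          funext fun u => mixcomp_cons_false d z u
        rw [e_c, e_d, sh_add_left, sh_add_right]
        have hA : sh w' z.2 (shuffle (mixcomp (fun v => c (true :: v)) z) (mixcomp d z))
            = sh w' (shuffle z.2 (mixcomp (fun v => c (true :: v)) z)) (mixcomp d z) :=
          (sh_assoc w' z.2 _ _).symm
        have hB : sh w' z.2 (shuffle (mixcomp c z) (mixcomp (fun v => d (true :: v)) z))
            = sh w' (mixcomp c z) (shuffle z.2 (mixcomp (fun v => d (true :: v)) z)) := by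
          rw [sh_comm w' (mixcomp c z), sh_assoc,
            shuffle_comm (mixcomp (fun v => d (true :: v)) z) (mixcomp c z)]
        simp only [shuffle] at *
        rw [hA, hB]
        ring
      | true =>
        rw [mixcomp_cons_true]
        rw [sh_congr (fun u _ => rfl) hD1, sh_add_right]
        show _ = sh (true :: w') (mixcomp c z) (mixcomp d z)
        simp only [sh]
        have e_c : (fun u : Word => mixcomp c z (true :: u))
            = fun u => shuffle z.1 (mixcomp (fun v => c (true :: v)) z) u :=
          funext fun u => mixcomp_cons_true c z u
        have e_d : (fun u : Word => mixcomp d z (true :: u))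
            = fun u => shuffle z.1 (mixcomp (fun v => d (true :: v)) z) u :=
          funext fun u => mixcomp_cons_true d z u
        rw [e_c, e_d]
        have hA : sh w' z.1 (shuffle (mixcomp (fun v => c (true :: v)) z) (mixcomp d z))
            = sh w' (shuffle z.1 (mixcomp (fun v => c (true :: v)) z)) (mixcomp d z) :=
          (sh_assoc w' z.1 _ _).symm
        have hB : sh w' z.1 (shuffle (mixcomp c z) (mixcomp (fun v => d (true :: v)) z))
            = sh w' (mixcomp c z) (shuffle z.1 (mixcomp (fun v => d (true :: v)) z)) := by
          rw [sh_comm w' (mixcomp c z), sh_assoc,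
            shuffle_comm (mixcomp (fun v => d (true :: v)) z) (mixcomp c z)]
        simp only [shuffle] at *
        rw [hA, hB]
        rfl


/-- The mixed composition product distributes over the shuffle
product in its left argument: (c ⧢ d) ∘̃ z = (c ∘̃ z) ⧢ (d ∘̃ z). -/
theorem mixcomp_shuffle_distrib (c d : Series) (z : Series × Series) :
    mixcomp (shuffle c d) z = shuffle (mixcomp c z) (mixcomp d z) := by
  exact funext fun w => key z w.length w le_rfl c d
end

section
/- If (G, ·, ◁) is a post-group, then the Grossman–Larson product a ⋆ b := (a ◁ b) · b makes (G, ⋆) a group sharing the identity with (G, ·), and the ⋆-inverse of a is (R_a)^{-1}(a^{·-1}), where R_a(b) = b ◁ a. -/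
/-- in a post-group (G, ·, ◁) (each R_a : b ↦ b ◁ a is an
automorphism of (G,·) and R_a ∘ R_b = R_{R_a(b)·a}), the Grossman–Larson
product a ⋆ b := (a ◁ b) · b is associative, shares the identity with (G,·),
and the ⋆-inverse of a is (R_a)⁻¹(a⁻¹), i.e. the b with b ◁ a = a⁻¹. -/
theorem grossman_larson_group {G : Type*} [Group G] (tri : G → G → G)
    (hbij : ∀ a : G, Function.Bijective fun b => tri b a)
    (hmul : ∀ a b c : G, tri (b * c) a = tri b a * tri c a)
    (hcomp : ∀ a b c : G, tri (tri c b) a = tri c (tri b a * a)) :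
    (∀ a b c : G,
      tri (tri a b * b) c * c = tri a (tri b c * c) * (tri b c * c)) ∧
    (∀ a : G, tri a 1 * 1 = a ∧ tri 1 a * a = a) ∧
    (∀ a b : G, tri b a = a⁻¹ → tri b a * a = 1 ∧ tri a b * b = 1) := by
  -- R_a(1) = 1
  have h1a : ∀ a : G, tri (1 : G) a = 1 := by
    intro a
    have h := hmul a 1 1
    rw [one_mul] at h
    exact mul_eq_left.mp h.symm
  -- R_1 = id
  have ha1 : ∀ c : G, tri c (1 : G) = c := by
    intro c
    have h := hcomp 1 1 c
    rw [h1a 1, one_mul] at h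
    exact (hbij 1).1 h
  -- associativity of the GL product
  have hassoc : ∀ a b c : G,
      tri (tri a b * b) c * c = tri a (tri b c * c) * (tri b c * c) := by
    intro a b c
    rw [hmul c (tri a b) b, hcomp c b a, mul_assoc]
  refine ⟨hassoc, fun a => ⟨by rw [ha1, mul_one], by rw [h1a, one_mul]⟩, ?_⟩
  intro a b hba
  have hba' : tri b a * a = 1 := by rw [hba, inv_mul_cancel]
  refine ⟨hba', ?_⟩
  -- pick a left ⋆-inverse c of b
  obtain ⟨c, hc⟩ := (hbij b).2 b⁻¹
  simp only at hc
  have hcb : tri c b * b = 1 := by rw [hc, inv_mul_cancel]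
  -- b ⋆ (a ⋆ b) = (b ⋆ a) ⋆ b = 1 ⋆ b = b
  have key : tri b (tri a b * b) * (tri a b * b) = b := by
    have h := hassoc b a b
    rw [hba', h1a, one_mul] at h
    exact h.symm
  calc tri a b * b
      = tri (tri c b * b) (tri a b * b) * (tri a b * b) := by
        rw [hcb, h1a, one_mul]
    _ = tri c (tri b (tri a b * b) * (tri a b * b)) *
          (tri b (tri a b * b) * (tri a b * b)) := hassoc c b _
    _ = tri c b * b := by rw [key]
    _ = 1 := hcb
end
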